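/- arXiv:1701.01989 — 3 statements merged into one kernel-verified Lean document; each statement's English description precedes it below -/
import Mathlib

section
/- Let h : (0,∞) → ℝ be twice differentiable and satisfy the second-order linear ODE h''(r) + (3/r − r/2)·h'(r) = h(r) for all r > 0. Then there exist constants c₁, c₂ ∈ ℝ such that h(r) = c₁·e^{r²/4}·r^{−2} + c₂·r^{−2} for all r > 0. -/
/-- A function with zero derivative on `(0,∞)` is constant there. -/
lemma const_on_pos (F : ℝ → ℝ) (hF : ∀ r : ℝ, 0 < r → HasDerivAt F 0 r) :
    ∀ r : ℝ, 0 < r → F r = F 1 := by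
  intro r hr
  have key : ∀ a b : ℝ, 0 < a → a ≤ b → F b = F a := by
    intro a b ha hab
    have hcont : ContinuousOn F (Set.Icc a b) := fun x hx =>
      ((hF x (lt_of_lt_of_le ha hx.1)).continuousAt).continuousWithinAt
    have hder : ∀ x ∈ Set.Ico a b, HasDerivWithinAt F 0 (Set.Ici x) x := fun x hx =>
      (hF x (lt_of_lt_of_le ha hx.1)).hasDerivWithinAt
    exact constant_of_has_deriv_right_zero hcont hder b ⟨hab, le_rfl⟩
  rcases le_total r 1 with hle | hle
  · exact (key r 1 hr hle).symm
  · exact key 1 r one_pos hle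

/-- **Radial ODE for drifted eigenfunctions.**
If `h : (0,∞) → ℝ` is twice differentiable and satisfies
`h''(r) + (3/r − r/2)·h'(r) = h(r)` for all `r > 0`, then
`h(r) = c₁·e^{r²/4}·r⁻² + c₂·r⁻²` for some constants `c₁, c₂`. -/
theorem radial_ode_solution
    (h : ℝ → ℝ)
    (hdiff : ∀ r : ℝ, 0 < r → DifferentiableAt ℝ h r)
    (hdiff' : ∀ r : ℝ, 0 < r → DifferentiableAt ℝ (deriv h) r)
    (hode : ∀ r : ℝ, 0 < r →
      deriv (deriv h) r + (3 / r - r / 2) * deriv h r = h r) :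
    ∃ c₁ c₂ : ℝ, ∀ r : ℝ, 0 < r →
      h r = c₁ * Real.exp (r ^ 2 / 4) / r ^ 2 + c₂ / r ^ 2 := by
  -- G = derivative of r² h(r)
  set G : ℝ → ℝ := fun s => 2 * s * h s + s ^ 2 * deriv h s with hGdef
  -- K = e^{-r²/4} / r
  set K : ℝ → ℝ := fun s => Real.exp (-(s ^ 2) / 4) * s⁻¹ with hKdef
  set F : ℝ → ℝ := fun s => G s * K s with hFdef
  have hG : ∀ r : ℝ, 0 < r →
      HasDerivAt G ((1 / r + r / 2) * G r) r := by
    intro r hr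
    have h1 : HasDerivAt (fun s : ℝ => 2 * s * h s)
        (2 * h r + 2 * r * deriv h r) r := by
      have := ((hasDerivAt_id r).const_mul (2:ℝ)).mul (hdiff r hr).hasDerivAt
      exact this.congr_deriv (by simp)
    have h2 : HasDerivAt (fun s : ℝ => s ^ 2 * deriv h s)
        (2 * r ^ 1 * deriv h r + r ^ 2 * deriv (deriv h) r) r := by
      have := (hasDerivAt_pow 2 r).mul (hdiff' r hr).hasDerivAt
      exact this.congr_deriv (by simp)
    have hsum := h1.add h2
    have heq : 2 * h r + 2 * r * deriv h r +
        (2 * r ^ 1 * deriv h r + r ^ 2 * deriv (deriv h) r)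
        = (1 / r + r / 2) * G r := by
      have hODE := hode r hr
      have hne : r ≠ 0 := ne_of_gt hr
      have hdd : deriv (deriv h) r = h r - (3 / r - r / 2) * deriv h r := by
        linarith
      rw [hGdef]
      simp only
      rw [hdd]
      field_simp
      ring
    rw [heq] at hsum
    exact hsum
  have hK : ∀ r : ℝ, 0 < r →
      HasDerivAt K (-(1 / r + r / 2) * K r) r := by
    intro r hr
    have hne : r ≠ 0 := ne_of_gt hr
    have hexp : HasDerivAt (fun s : ℝ => Real.exp (-(s ^ 2) / 4))
        (Real.exp (-(r ^ 2) / 4) * (-(2 * r ^ 1) / 4)) r := by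
      have hin : HasDerivAt (fun s : ℝ => -(s ^ 2) / 4) (-(2 * r ^ 1) / 4) r :=
        ((hasDerivAt_pow 2 r).neg).div_const 4
      exact (Real.hasDerivAt_exp _).comp r hin
    have hinv : HasDerivAt (fun s : ℝ => s⁻¹) (-(r ^ 2)⁻¹) r := hasDerivAt_inv hne
    have := hexp.mul hinv
    have heq : Real.exp (-(r ^ 2) / 4) * (-(2 * r ^ 1) / 4) * r⁻¹ +
        Real.exp (-(r ^ 2) / 4) * -(r ^ 2)⁻¹ = -(1 / r + r / 2) * K r := by
      rw [hKdef]; field_simp; ring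
    rw [heq] at this
    exact this
  have hF0 : ∀ r : ℝ, 0 < r → HasDerivAt F 0 r := by
    intro r hr
    have := (hG r hr).mul (hK r hr)
    have heq : (1 / r + r / 2) * G r * K r + G r * (-(1 / r + r / 2) * K r) = 0 := by
      ring
    rw [heq] at this
    exact this
  set c : ℝ := F 1 with hcdef
  have hFc : ∀ r : ℝ, 0 < r → F r = c := fun r hr => const_on_pos F hF0 r hr
  -- G r = c * r * e^{r²/4}
  have hGval : ∀ r : ℝ, 0 < r → G r = c * r * Real.exp (r ^ 2 / 4) := by
    intro r hr
    have hne : r ≠ 0 := ne_of_gt hr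
    have := hFc r hr
    rw [hFdef] at this
    simp only at this
    have hexpne : Real.exp (-(r ^ 2) / 4) ≠ 0 := Real.exp_ne_zero _
    have hEE : Real.exp (-(r ^ 2) / 4) * Real.exp (r ^ 2 / 4) = 1 := by
      rw [← Real.exp_add]; ring_nf; exact Real.exp_zero
    rw [hKdef] at this
    simp only at this
    have : G r * Real.exp (-(r ^ 2) / 4) = c * r := by
      field_simp at this
      rw [neg_div]
      linarith [this]
    calc G r = G r * (Real.exp (-(r ^ 2) / 4) * Real.exp (r ^ 2 / 4)) := by
          rw [hEE]; ring
      _ = (G r * Real.exp (-(r ^ 2) / 4)) * Real.exp (r ^ 2 / 4) := by ring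
      _ = c * r * Real.exp (r ^ 2 / 4) := by rw [this]
  -- P r = r² h r - 2c e^{r²/4} is constant
  set P : ℝ → ℝ := fun s => s ^ 2 * h s - 2 * c * Real.exp (s ^ 2 / 4) with hPdef
  have hP0 : ∀ r : ℝ, 0 < r → HasDerivAt P 0 r := by
    intro r hr
    have h2 : HasDerivAt (fun s : ℝ => s ^ 2 * h s)
        (2 * r ^ 1 * h r + r ^ 2 * deriv h r) r :=
      (hasDerivAt_pow 2 r).mul (hdiff r hr).hasDerivAt
    have hexp : HasDerivAt (fun s : ℝ => 2 * c * Real.exp (s ^ 2 / 4))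
        (2 * c * (Real.exp (r ^ 2 / 4) * (2 * r ^ 1 / 4))) r := by
      have hin : HasDerivAt (fun s : ℝ => s ^ 2 / 4) (2 * r ^ 1 / 4) r :=
        (hasDerivAt_pow 2 r).div_const 4
      have := ((Real.hasDerivAt_exp _).comp r hin).const_mul (2 * c)
      simpa [mul_comm] using this
    have := h2.sub hexp
    have heq : 2 * r ^ 1 * h r + r ^ 2 * deriv h r -
        2 * c * (Real.exp (r ^ 2 / 4) * (2 * r ^ 1 / 4)) = 0 := by
      have := hGval r hr
      rw [hGdef] at this
      simp only at this
      nlinarith [this]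
    rw [heq] at this
    exact this
  set c₂ : ℝ := P 1 with hc2def
  have hPc : ∀ r : ℝ, 0 < r → P r = c₂ := fun r hr => const_on_pos P hP0 r hr
  refine ⟨2 * c, c₂, fun r hr => ?_⟩
  have := hPc r hr
  rw [hPdef] at this
  simp only at this
  have hne : (r : ℝ) ^ 2 ≠ 0 := pow_ne_zero 2 (ne_of_gt hr)
  field_simp
  nlinarith [this]
end

section
/- The functions v(x) = |x|^{−2} and w(x) = e^{|x|²/4}·|x|^{−2}, defined on ℝ⁴ ∖ {0}, both satisfy the drifted eigenfunction equation: Δv(x) − (1/2)⟨x, ∇v(x)⟩ = v(x) and Δw(x) − (1/2)⟨x, ∇w(x)⟩ = w(x) for every x ∈ ℝ⁴ with x ≠ 0. -/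
open scoped RealInnerProductSpace

noncomputable abbrev E4 : Type := EuclideanSpace ℝ (Fin 4)

/-- The Euclidean Laplacian on `ℝ⁴`: sum of pure second partial derivatives in the
standard orthonormal directions. -/
noncomputable def lap (v : E4 → ℝ) (x : E4) : ℝ :=
  ∑ i : Fin 4,
    fderiv ℝ (fun y : E4 => fderiv ℝ v y (EuclideanSpace.single i (1 : ℝ))) x
      (EuclideanSpace.single i (1 : ℝ))

/-- The drifted eigenfunction equation `Δv(x) − (1/2)⟨x, ∇v(x)⟩ = v(x)` at `x`,
with the weight `f(x) = |x|²/4` (so `∇f(x) = x/2` and `⟨∇f(x), ∇v(x)⟩ = (1/2)·Dv(x)(x)`). -/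
def DriftedEigen (v : E4 → ℝ) (x : E4) : Prop :=
  lap v x - (1 / 2) * fderiv ℝ v x x = v x

lemma sum_sq_eq (x : E4) : ∑ i : Fin 4, x i * x i = ‖x‖ ^ 2 := by
  rw [← real_inner_self_eq_norm_sq]
  simp only [PiLp.inner_apply, RCLike.inner_apply, conj_trivial]

lemma radial_eigen (φ φ' φ'' : ℝ → ℝ)
    (h1 : ∀ t : ℝ, 0 < t → HasDerivAt φ (φ' t) t)
    (h2 : ∀ t : ℝ, 0 < t → HasDerivAt φ' (φ'' t) t)
    (hode : ∀ t : ℝ, 0 < t →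
      (8 * φ' t + 4 * t * φ'' t) - 1 / 2 * (φ' t * (2 * t)) = φ t)
    (x : E4) (hx : x ≠ 0) : DriftedEigen (fun y : E4 => φ (‖y‖ ^ 2)) x := by
  have ht : 0 < ‖x‖ ^ 2 := pow_pos (norm_pos_iff.mpr hx) 2
  have hq : ∀ y : E4, HasFDerivAt (fun z : E4 => ‖z‖ ^ 2) (2 • innerSL ℝ y) y :=
    fun y => (hasStrictFDerivAt_norm_sq y).hasFDerivAt
  have hv : ∀ y : E4, y ≠ 0 →
      HasFDerivAt (fun z : E4 => φ (‖z‖ ^ 2)) (φ' (‖y‖ ^ 2) • (2 • innerSL ℝ y)) y := by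
    intro y hy
    exact (h1 _ (pow_pos (norm_pos_iff.mpr hy) 2)).comp_hasFDerivAt y (hq y)
  have hev : ∀ i : Fin 4,
      (fun y : E4 => fderiv ℝ (fun z : E4 => φ (‖z‖ ^ 2)) y (EuclideanSpace.single i (1 : ℝ)))
        =ᶠ[nhds x] fun y : E4 => φ' (‖y‖ ^ 2) * (2 * y i) := by
    intro i
    filter_upwards [isOpen_compl_singleton.mem_nhds (by simpa using hx :
      x ∈ ({0}ᶜ : Set E4))] with y hy
    rw [(hv y (by simpa using hy)).fderiv]
    simp [EuclideanSpace.inner_single_right, two_smul]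
    ring
  have key : ∀ i : Fin 4,
      fderiv ℝ (fun y : E4 => fderiv ℝ (fun z : E4 => φ (‖z‖ ^ 2)) y
          (EuclideanSpace.single i (1 : ℝ))) x (EuclideanSpace.single i (1 : ℝ))
        = 2 * φ' (‖x‖ ^ 2) + φ'' (‖x‖ ^ 2) * (2 * x i) * (2 * x i) := by
    intro i
    rw [(hev i).fderiv_eq]
    have hc : HasFDerivAt (fun y : E4 => φ' (‖y‖ ^ 2)) (φ'' (‖x‖ ^ 2) • (2 • innerSL ℝ x)) x :=
      (h2 _ ht).comp_hasFDerivAt x (hq x)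
    have hd : HasFDerivAt (fun y : E4 => 2 * y i)
        ((2 : ℝ) • (EuclideanSpace.proj i : E4 →L[ℝ] ℝ)) x :=
      ((EuclideanSpace.proj i : E4 →L[ℝ] ℝ).hasFDerivAt (x := x)).const_mul (2 : ℝ)
    have hG := hc.mul hd
    rw [show (fun y : E4 => φ' (‖y‖ ^ 2) * (2 * y i)) = (fun y : E4 => φ' (‖y‖ ^ 2)) * (fun y : E4 => 2 * y i) from rfl, hG.fderiv]
    simp [EuclideanSpace.inner_single_right, two_smul]
    ring
  have hlap : lap (fun y : E4 => φ (‖y‖ ^ 2)) x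
      = 8 * φ' (‖x‖ ^ 2) + 4 * ‖x‖ ^ 2 * φ'' (‖x‖ ^ 2) := by
    unfold lap
    rw [Finset.sum_congr rfl fun i _ => key i]
    rw [Finset.sum_add_distrib]
    have h2' : ∑ i : Fin 4, φ'' (‖x‖ ^ 2) * (2 * x i) * (2 * x i)
        = 4 * ‖x‖ ^ 2 * φ'' (‖x‖ ^ 2) := by
      rw [Finset.sum_congr rfl (fun i _ => by ring :
        ∀ i ∈ Finset.univ, φ'' (‖x‖ ^ 2) * (2 * x i) * (2 * x i)
          = 4 * φ'' (‖x‖ ^ 2) * (x i * x i)), ← Finset.mul_sum, sum_sq_eq]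
      ring
    rw [h2']
    simp
    ring
  have hgrad : fderiv ℝ (fun y : E4 => φ (‖y‖ ^ 2)) x x = φ' (‖x‖ ^ 2) * (2 * ‖x‖ ^ 2) := by
    rw [(hv x hx).fderiv]
    simp only [ContinuousLinearMap.smul_apply, smul_eq_mul, nsmul_eq_mul, innerSL_apply_apply,
      real_inner_self_eq_norm_sq]
    push_cast
    ring
  unfold DriftedEigen
  rw [hlap, hgrad]
  exact hode _ ht

/-- **The two singular radial solutions.** The functions `v(x) = |x|⁻²` and
`w(x) = e^{|x|²/4}·|x|⁻²` both satisfy `Δv − (1/2)⟨x, ∇v⟩ = v` on `ℝ⁴ ∖ {0}`. -/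
theorem green_type_solutions :
    ∀ x : E4, x ≠ 0 →
      DriftedEigen (fun y : E4 => (‖y‖ ^ 2)⁻¹) x ∧
      DriftedEigen (fun y : E4 => Real.exp (‖y‖ ^ 2 / 4) * (‖y‖ ^ 2)⁻¹) x := by
  intro x hx
  constructor
  · exact radial_eigen (fun t => t⁻¹) (fun t => -(1 / t ^ 2)) (fun t => 2 / t ^ 3)
      (fun t ht => by
        have := hasDerivAt_inv ht.ne'
        exact this.congr_deriv (by rw [one_div]))
      (fun t ht => by
        have := ((hasDerivAt_pow 2 t).inv (pow_ne_zero 2 ht.ne')).neg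
        refine (this.congr_deriv ?_).congr_of_eventuallyEq (Filter.Eventually.of_forall fun s => ?_)
        · symm
          show (2 : ℝ) / t ^ 3 = _
          rw [neg_div, neg_neg]
          push_cast
          rw [div_eq_div_iff (by positivity) (by positivity)]
          ring
        · simp [one_div])
      (fun t ht => by field_simp; ring) x hx
  · have hexp : ∀ t : ℝ, HasDerivAt (fun s : ℝ => Real.exp (s / 4)) (Real.exp (t / 4) * (1 / 4)) t := by
      intro t
      have := (Real.hasDerivAt_exp (t / 4)).comp t ((hasDerivAt_id t).div_const 4)
      exact this
    exact radial_eigen (fun t => Real.exp (t / 4) * t⁻¹)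
      (fun t => Real.exp (t / 4) * (1 / (4 * t) - 1 / t ^ 2))
      (fun t => Real.exp (t / 4) * (1 / (16 * t) - 1 / (2 * t ^ 2) + 2 / t ^ 3))
      (fun t ht => by
        have := (hexp t).mul (hasDerivAt_inv ht.ne')
        exact this.congr_deriv (by beta_reduce; field_simp; ring))
      (fun t ht => by
        have h1 := ((hexp t).mul_const (1 / 4 : ℝ)).mul (hasDerivAt_inv ht.ne')
        have h2 := (hexp t).mul ((hasDerivAt_pow 2 t).inv (pow_ne_zero 2 ht.ne')).neg
        have h := h1.add h2
        have hfun : (((fun y : ℝ => Real.exp (y / 4) * (1 / 4)) * fun y : ℝ => y⁻¹) + (fun s : ℝ => Real.exp (s / 4)) * -(fun x : ℝ => x ^ 2)⁻¹)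
            = fun s : ℝ => Real.exp (s / 4) * (1 / (4 * s) - 1 / s ^ 2) := by
          funext s
          simp only [Pi.add_apply, Pi.mul_apply, Pi.neg_apply, Pi.inv_apply]
          by_cases hs : s = 0
          · simp [hs]
          · field_simp
            ring
        rw [hfun] at h
        exact h.congr_deriv (by simp only [Pi.neg_apply, Pi.inv_apply]; norm_num; field_simp; ring))
      (fun t ht => by
        field_simp
        ring) x hx
end

section
/- Let u : ℝ⁴ → ℝ be a C² function that is bounded on all of ℝ⁴ and satisfies Δu(x) − (1/2)⟨x, ∇u(x)⟩ = u(x) for every x ∈ ℝ⁴. Then u is identically zero. -/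
open Real Topology Filter Set


-- 1D second derivative test at a global max
lemma oneDim (g : ℝ → ℝ) (hg : Differentiable ℝ g) (c : ℝ)
    (hc : HasDerivAt (deriv g) c 0) (hmax : ∀ t, g t ≤ g 0) : c ≤ 0 := by
  by_contra h
  push_neg at h
  have hloc : IsLocalMax g 0 := Filter.Eventually.of_forall hmax
  have h0 : deriv g 0 = 0 := hloc.deriv_eq_zero
  rw [hasDerivAt_iff_tendsto_slope] at hc
  have hev : ∀ᶠ t in 𝓝[>] (0:ℝ), c / 2 < slope (deriv g) 0 t := by
    apply (hc.mono_left (nhdsWithin_mono _ (by intro t ht; exact ne_of_gt ht))).eventually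
    exact eventually_gt_nhds (by linarith)
  obtain ⟨ε, hε, hIoo⟩ := (nhdsGT_basis (0:ℝ)).eventually_iff.mp hev
  have hpos : ∀ t ∈ Set.Ioo (0:ℝ) ε, 0 < deriv g t := by
    intro t ht
    have := hIoo ht
    rw [slope_def_field, h0] at this
    have h2 : 0 < (deriv g t - 0) / (t - 0) := lt_trans (by linarith) this
    have ht0 : 0 < t := ht.1
    nlinarith [div_mul_cancel₀ (deriv g t - 0) (by linarith : t - 0 ≠ 0)]
  have hmono : StrictMonoOn g (Set.Icc 0 (ε/2)) := by
    apply strictMonoOn_of_deriv_pos (convex_Icc _ _) hg.continuous.continuousOn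
    intro t ht
    rw [interior_Icc] at ht
    exact hpos t ⟨ht.1, by linarith [ht.2]⟩
  have := hmono (Set.left_mem_Icc.2 (by linarith)) (Set.right_mem_Icc.2 (by linarith)) (by linarith)
  linarith [hmax (ε/2)]

-- differentiability of y ↦ fderiv v y e
lemma diff_fderiv_apply (v : E4 → ℝ) (hv : ContDiff ℝ 2 v) (e : E4) :
    Differentiable ℝ (fun y : E4 => fderiv ℝ v y e) := by
  have h1 : ContDiff ℝ 1 (fderiv ℝ v) := hv.fderiv_right (by norm_num)
  exact ((ContinuousLinearMap.apply ℝ ℝ e).contDiff.comp h1).differentiable one_ne_zero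

-- second derivative test along direction e at a global max
lemma secondDeriv_nonpos (v : E4 → ℝ) (hv : ContDiff ℝ 2 v) (x₀ e : E4)
    (hmax : ∀ y, v y ≤ v x₀) :
    fderiv ℝ (fun y => fderiv ℝ v y e) x₀ e ≤ 0 := by
  have hvd : Differentiable ℝ v := hv.differentiable two_ne_zero
  set L : ℝ → E4 := fun t => x₀ + t • e with hL
  have hLd : ∀ t : ℝ, HasDerivAt L e t := by
    intro t
    have := ((hasDerivAt_id t).smul_const e).const_add x₀
    rw [one_smul] at this
    exact this
  set g : ℝ → ℝ := fun t => v (L t) with hg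
  have hgd : Differentiable ℝ g := fun t =>
    ((hvd (L t)).hasFDerivAt.comp_hasDerivAt t (hLd t)).differentiableAt
  have hderiv : ∀ t, deriv g t = fderiv ℝ v (L t) e := by
    intro t
    exact ((hvd (L t)).hasFDerivAt.comp_hasDerivAt t (hLd t)).deriv
  set w : E4 → ℝ := fun y => fderiv ℝ v y e with hw
  have hwd : Differentiable ℝ w := diff_fderiv_apply v hv e
  have hc : HasDerivAt (deriv g) (fderiv ℝ w x₀ e) 0 := by
    have : HasDerivAt (fun t => w (L t)) (fderiv ℝ w (L 0) e) 0 :=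
      (hwd (L 0)).hasFDerivAt.comp_hasDerivAt 0 (hLd 0)
    have hfun : deriv g = fun t => w (L t) := funext fun t => hderiv t
    rw [hfun]
    simpa [hL] using this
  exact oneDim g hgd _ hc (fun t => by simpa [hg, hL] using hmax (L t))


lemma le_zero (u : E4 → ℝ) (hu : ContDiff ℝ 2 u) (C : ℝ) (hC : ∀ x : E4, u x ≤ C)
    (heq : ∀ x : E4, DriftedEigen u x) : ∀ x : E4, u x ≤ 0 := by
  have key : ∀ x : E4, ∀ ε : ℝ, 0 < ε → u x ≤ ε * (8 + ‖x‖^2) := by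
    intro x ε hε
    set v : E4 → ℝ := fun y => u y - ε * ‖y‖^2 with hvdef
    have hud : Differentiable ℝ u := hu.differentiable two_ne_zero
    have hq : ∀ y : E4, HasFDerivAt (fun y : E4 => ε * ‖y‖^2)
        (ε • (2 • innerSL ℝ y)) y := fun y =>
      ((hasStrictFDerivAt_norm_sq y).hasFDerivAt).const_mul ε
    have hvf : ∀ y : E4, HasFDerivAt v (fderiv ℝ u y - ε • (2 • innerSL ℝ y)) y :=
      fun y => (hud y).hasFDerivAt.sub (hq y)
    have hvC2 : ContDiff ℝ 2 v := hu.sub (contDiff_const.mul (contDiff_norm_sq ℝ))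
    have hv0 : v 0 = u 0 := by simp [hvdef]
    -- existence of a global max of v
    set R : ℝ := Real.sqrt (max 0 ((C - v 0)/ε)) with hR
    have hRnn : 0 ≤ R := Real.sqrt_nonneg _
    have hRsq : R^2 = max 0 ((C - v 0)/ε) := Real.sq_sqrt (le_max_left _ _)
    obtain ⟨x₀, hx₀K, hmaxK⟩ := (isCompact_closedBall (0:E4) R).exists_isMaxOn
      ⟨0, Metric.mem_closedBall_self hRnn⟩ hvC2.continuous.continuousOn
    have hglob : ∀ y : E4, v y ≤ v x₀ := by
      intro y
      by_cases hy : ‖y‖ ≤ R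
      · exact hmaxK (by simpa [Metric.mem_closedBall, dist_eq_norm] using hy)
      · push_neg at hy
        have h0 : v 0 ≤ v x₀ := hmaxK (Metric.mem_closedBall_self hRnn)
        have hy2 : R^2 < ‖y‖^2 := by nlinarith
        have hq2 : (C - v 0)/ε ≤ R^2 := hRsq ▸ le_max_right _ _
        have h3 : C - v 0 ≤ ε * ‖y‖^2 := by
          have := (div_le_iff₀ hε).mp (le_of_lt (lt_of_le_of_lt hq2 hy2))
          linarith
        have h4 : v y ≤ v 0 := by
          have h5 := hC y
          simp only [hvdef, norm_zero]
          nlinarith [hv0, h3, h5]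
        linarith
    -- first derivative zero at x₀
    have hlm : IsLocalMax v x₀ := Filter.Eventually.of_forall hglob
    have hfd0 : fderiv ℝ v x₀ = 0 := hlm.fderiv_eq_zero
    have hfu : fderiv ℝ u x₀ x₀ = 2 * ε * ‖x₀‖^2 := by
      have h1 := (hvf x₀).fderiv
      rw [hfd0] at h1
      have h2 : fderiv ℝ u x₀ = ε • (2 • innerSL ℝ x₀) := sub_eq_zero.mp h1.symm
      rw [h2]
      simp only [ContinuousLinearMap.smul_apply, innerSL_apply_apply,
        smul_eq_mul, real_inner_self_eq_norm_sq]
      ring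
    -- laplacian comparison and sign
    have hterm : ∀ i : Fin 4,
        fderiv ℝ (fun y : E4 => fderiv ℝ v y (EuclideanSpace.single i (1:ℝ))) x₀
            (EuclideanSpace.single i (1:ℝ)) =
          fderiv ℝ (fun y : E4 => fderiv ℝ u y (EuclideanSpace.single i (1:ℝ))) x₀
            (EuclideanSpace.single i (1:ℝ)) - 2 * ε := by
      intro i
      set e : E4 := EuclideanSpace.single i (1:ℝ) with he
      have hee : ‖e‖ = 1 := by simp [he, EuclideanSpace.norm_single]
      have hfun : (fun y : E4 => fderiv ℝ v y e)
          = fun y : E4 => fderiv ℝ u y e - ((2*ε) • innerSL ℝ e) y := by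
        funext y
        rw [(hvf y).fderiv]
        simp only [ContinuousLinearMap.sub_apply, ContinuousLinearMap.smul_apply,
          innerSL_apply_apply, smul_eq_mul, nsmul_eq_mul]
        rw [real_inner_comm]
        ring
      have h1 : HasFDerivAt (fun y : E4 => fderiv ℝ u y e)
          (fderiv ℝ (fun y : E4 => fderiv ℝ u y e) x₀) x₀ :=
        (diff_fderiv_apply u hu e x₀).hasFDerivAt
      have h2 := ((2*ε) • innerSL ℝ e).hasFDerivAt (x := x₀)
      have h3 : HasFDerivAt (fun y : E4 => fderiv ℝ v y e)
          (fderiv ℝ (fun y : E4 => fderiv ℝ u y e) x₀ - (2*ε) • innerSL ℝ e) x₀ := by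
        rw [hfun]; exact h1.sub h2
      rw [h3.fderiv]
      have hone : (inner ℝ e e : ℝ) = 1 := by
        rw [real_inner_self_eq_norm_sq, hee]; norm_num
      simp only [ContinuousLinearMap.sub_apply, ContinuousLinearMap.smul_apply,
        innerSL_apply_apply, smul_eq_mul, hone]
      ring
    have hlap : lap v x₀ = lap u x₀ - 8 * ε := by
      unfold lap
      rw [Finset.sum_congr rfl (fun i _ => hterm i), Finset.sum_sub_distrib,
        Finset.sum_const]
      simp
      ring
    have hlapneg : lap v x₀ ≤ 0 := by
      unfold lap
      apply Finset.sum_nonpos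
      intro i _
      exact secondDeriv_nonpos v hvC2 x₀ _ hglob
    have hequ := heq x₀
    unfold DriftedEigen at hequ
    have hx₀ : u x₀ ≤ 8 * ε - ε * ‖x₀‖^2 := by nlinarith [hequ, hfu, hlap, hlapneg]
    have hvx := hglob x
    simp only [hvdef] at hvx
    nlinarith [sq_nonneg ‖x₀‖]
  intro x
  by_contra h
  push_neg at h
  have hkey := key x (u x / (2 * (8 + ‖x‖^2))) (by positivity)
  have h8 : (0:ℝ) < 8 + ‖x‖^2 := by positivity
  rw [div_mul_eq_mul_div, mul_div_assoc] at hkey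
  have hhalf : (8 + ‖x‖^2) / (2 * (8 + ‖x‖^2)) = 1/2 := by
    rw [div_eq_iff (by positivity)]; ring
  rw [hhalf] at hkey
  linarith

lemma lap_neg (u : E4 → ℝ) (x : E4) : lap (fun y => -u y) x = - lap u x := by
  unfold lap
  rw [← Finset.sum_neg_distrib]
  apply Finset.sum_congr rfl
  intro i _
  have hfun : (fun y : E4 => fderiv ℝ (fun z : E4 => -u z) y (EuclideanSpace.single i (1:ℝ)))
      = fun y : E4 => -(fderiv ℝ u y (EuclideanSpace.single i (1:ℝ))) := by
    funext y
    rw [fderiv_fun_neg]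
    simp
  rw [hfun, fderiv_fun_neg]
  simp

/-- **Liouville theorem for the drifted Laplacian.** A bounded `C²` function on all of
`ℝ⁴` satisfying `Δu − (1/2)⟨x, ∇u⟩ = u` everywhere is identically zero. -/
theorem liouville_drifted
    (u : E4 → ℝ)
    (hu : ContDiff ℝ 2 u)
    (hbdd : ∃ C : ℝ, ∀ x : E4, |u x| ≤ C)
    (heq : ∀ x : E4, DriftedEigen u x) :
    ∀ x : E4, u x = 0 := by
  obtain ⟨C, hC⟩ := hbdd
  intro x
  have h1 := le_zero u hu C (fun y => (abs_le.mp (hC y)).2) heq x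
  have heq' : ∀ y : E4, DriftedEigen (fun z : E4 => -u z) y := by
    intro y
    have h := heq y
    unfold DriftedEigen at h ⊢
    rw [lap_neg, fderiv_fun_neg]
    simp only [ContinuousLinearMap.neg_apply]
    linarith
  have h2 := le_zero (fun z : E4 => -u z) hu.neg C
    (fun y => by show -u y ≤ C; linarith [(abs_le.mp (hC y)).1]) heq' x
  simp at h2
  linarith
end
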